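/- Near-full rank for the square-root generating function with momentum and weight decay: for 0 ≤ μ < λ ≤ 1, let g be the formal power series with g(0)=1 and g² = 1/((1−λx)(1−μx)) (i.e., g = √(G_{λ,μ})). Then for every d ∈ ℕ, the (d+1)×(d+1) Hankel matrix with (i,j)-entry the coefficient of x^{i+j} in g has rank at least d−4 (co-rank at most 5). -/

import Mathlib

open PowerSeries Polynomial

private lemma hankel_kernel_eq_zero (l m : ℝ) (hm : 0 ≤ m) (hml : m < l)
    (g : PowerSeries ℝ)
    (hg : g ^ 2 * ((1 - PowerSeries.C l * PowerSeries.X)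
      * (1 - PowerSeries.C m * PowerSeries.X)) = 1) (d : ℕ)
    (v : Fin (d + 1) → ℝ)
    (hv : ∀ i : Fin (d + 1), ∑ j : Fin (d + 1),
      PowerSeries.coeff ((i : ℕ) + (j : ℕ)) g * v j = 0) :
    v = 0 := by
  classical
  have hl0 : 0 < l := lt_of_le_of_lt hm hml
  -- the reversed polynomial
  set V : Polynomial ℝ := ∑ j : Fin (d + 1), Polynomial.C (v j) * Polynomial.X ^ (d - (j : ℕ))
    with hV
  set A : PowerSeries ℝ := (V : PowerSeries ℝ) * g with hA
  -- coefficients d..2d of A vanish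
  have hAc : ∀ n : ℕ, d ≤ n → n ≤ 2 * d → PowerSeries.coeff n A = 0 := by
    intro n hn1 hn2
    have hVc : (V : PowerSeries ℝ)
        = ∑ j : Fin (d + 1), PowerSeries.C (v j) * PowerSeries.X ^ (d - (j : ℕ)) := by
      rw [hV]
      rw [← Polynomial.coeToPowerSeries.ringHom_apply, map_sum]
      refine Finset.sum_congr rfl fun j _ => ?_
      simp [Polynomial.coeToPowerSeries.ringHom_apply, Polynomial.coe_pow]
    rw [hA, hVc, Finset.sum_mul, map_sum]
    have : ∀ j : Fin (d + 1),
        PowerSeries.coeff n (PowerSeries.C (v j) * PowerSeries.X ^ (d - (j : ℕ)) * g)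
          = PowerSeries.coeff (((n - d : ℕ)) + (j : ℕ)) g * v j := by
      intro j
      have hj : (j : ℕ) ≤ d := Nat.lt_succ_iff.mp j.isLt
      rw [mul_assoc, PowerSeries.coeff_C_mul, PowerSeries.coeff_X_pow_mul']
      rw [if_pos (by omega)]
      have : n - (d - (j : ℕ)) = (n - d) + (j : ℕ) := by omega
      rw [this, mul_comm]
    rw [Finset.sum_congr rfl fun j _ => this j]
    have hi : n - d < d + 1 := by omega
    have := hv ⟨n - d, hi⟩
    simpa using this
  -- truncation
  set P : Polynomial ℝ := PowerSeries.trunc d A with hP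
  have hEdvd : (PowerSeries.X : PowerSeries ℝ) ^ (2 * d + 1) ∣ (A - (P : PowerSeries ℝ)) := by
    rw [PowerSeries.X_pow_dvd_iff]
    intro n hn
    rw [map_sub, Polynomial.coeff_coe, hP, PowerSeries.coeff_trunc]
    by_cases h : n < d
    · rw [if_pos h, sub_self]
    · rw [if_neg h, hAc n (by omega) (by omega), sub_zero]
  -- the polynomial identity
  set q : Polynomial ℝ := (1 - Polynomial.C l * Polynomial.X) * (1 - Polynomial.C m * Polynomial.X)
    with hq
  have hqcoe : (q : PowerSeries ℝ) = (1 - PowerSeries.C l * PowerSeries.X)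
      * (1 - PowerSeries.C m * PowerSeries.X) := by
    rw [hq, ← Polynomial.coeToPowerSeries.ringHom_apply]
    simp [Polynomial.coeToPowerSeries.ringHom_apply]
  set Q : Polynomial ℝ := V ^ 2 - q * P ^ 2 with hQ
  have hQcoe : (Q : PowerSeries ℝ) = ((1 - PowerSeries.C l * PowerSeries.X)
      * (1 - PowerSeries.C m * PowerSeries.X)) * ((A + (P : PowerSeries ℝ))
      * (A - (P : PowerSeries ℝ))) := by
    have h1 : (Q : PowerSeries ℝ) = (V : PowerSeries ℝ) ^ 2 - (q : PowerSeries ℝ)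
        * (P : PowerSeries ℝ) ^ 2 := by
      rw [hQ, ← Polynomial.coeToPowerSeries.ringHom_apply, map_sub, map_mul, map_pow, map_pow]
      simp [Polynomial.coeToPowerSeries.ringHom_apply]
    have h2 : (V : PowerSeries ℝ) ^ 2 = ((1 - PowerSeries.C l * PowerSeries.X)
        * (1 - PowerSeries.C m * PowerSeries.X)) * A ^ 2 := by
      rw [hA]
      have : ((V : PowerSeries ℝ) * g) ^ 2 = (V : PowerSeries ℝ) ^ 2
          * (g ^ 2) := by ring
      rw [this]
      calc (V : PowerSeries ℝ) ^ 2 = (V : PowerSeries ℝ) ^ 2 * (g ^ 2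
            * ((1 - PowerSeries.C l * PowerSeries.X)
              * (1 - PowerSeries.C m * PowerSeries.X))) := by rw [hg, mul_one]
        _ = _ := by ring
    rw [h1, h2, hqcoe]
    ring
  have hQdvd : (PowerSeries.X : PowerSeries ℝ) ^ (2 * d + 1) ∣ (Q : PowerSeries ℝ) := by
    rw [hQcoe]
    exact Dvd.dvd.mul_left (Dvd.dvd.mul_left hEdvd _) _
  -- degree bound
  have hVdeg : V.natDegree ≤ d := by
    rw [hV]
    refine Polynomial.natDegree_sum_le_of_forall_le _ _ fun j _ => ?_
    exact (Polynomial.natDegree_C_mul_X_pow_le _ _).trans (by omega)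
  have hQzero : Q = 0 := by
    have hcoeffs : ∀ n, n ≤ 2 * d → Q.coeff n = 0 := by
      intro n hn
      rw [PowerSeries.X_pow_dvd_iff] at hQdvd
      have := hQdvd n (by omega)
      rwa [Polynomial.coeff_coe] at this
    have hQdeg : Q.natDegree ≤ 2 * d := by
      rw [hQ]
      have hq2 : q.natDegree ≤ 2 := by rw [hq]; compute_degree
      have hright : (q * P ^ 2).natDegree ≤ 2 * d := by
        by_cases hP0 : P = 0
        · simp [hP0]
        · have hPd : P.natDegree < d := by
            rw [Polynomial.natDegree_lt_iff_degree_lt hP0]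
            exact PowerSeries.degree_trunc_lt A d
          refine Polynomial.natDegree_mul_le.trans ?_
          have : (P ^ 2).natDegree ≤ 2 * P.natDegree := Polynomial.natDegree_pow_le
          omega
      refine Polynomial.natDegree_sub_le_iff_left hright |>.mpr ?_
      exact Polynomial.natDegree_pow_le.trans (by omega)
    ext n
    by_cases h : n ≤ 2 * d
    · simp [hcoeffs n h]
    · exact Polynomial.coeff_eq_zero_of_natDegree_lt (by omega)
  -- evaluation identity
  have h0 : V ^ 2 = q * P ^ 2 := by rwa [hQ, sub_eq_zero] at hQzero
  have heval : ∀ x : ℝ, V.eval x ^ 2 = ((1 - l * x) * (1 - m * x)) * P.eval x ^ 2 := by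
    intro x
    have := congrArg (Polynomial.eval x) h0
    simpa [hq, Polynomial.eval_mul, Polynomial.eval_pow] using this
  have hlm : 0 < l + m := by linarith
  have hab : 1 / l < 2 / (l + m) := by
    rw [div_lt_div_iff₀ hl0 hlm]; linarith
  have hVroot : Set.Ioo (1 / l) (2 / (l + m)) ⊆ {x | V.IsRoot x} := by
    intro x hx
    have hx1 : 1 < x * l := (div_lt_iff₀ hl0).mp hx.1
    have hx2 : x * (l + m) < 2 := (lt_div_iff₀ hlm).mp hx.2
    have h1 : 1 - l * x < 0 := by nlinarith
    have h2 : 0 < 1 - m * x := by nlinarith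
    have hqneg : (1 - l * x) * (1 - m * x) < 0 := mul_neg_of_neg_of_pos h1 h2
    have hle : V.eval x ^ 2 ≤ 0 := by
      rw [heval x]
      exact mul_nonpos_of_nonpos_of_nonneg hqneg.le (sq_nonneg _)
    have h3 : V.eval x ^ 2 = 0 := le_antisymm hle (sq_nonneg _)
    exact pow_eq_zero_iff two_ne_zero |>.mp h3
  have hV0 : V = 0 := by
    apply Polynomial.eq_zero_of_infinite_isRoot
    exact (Set.Ioo_infinite hab).mono hVroot
  funext j
  have hj : (j : ℕ) ≤ d := Nat.lt_succ_iff.mp j.isLt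
  have hcj : V.coeff (d - (j : ℕ)) = v j := by
    rw [hV, Polynomial.finset_sum_coeff]
    rw [Finset.sum_eq_single j]
    · simp [Polynomial.coeff_C_mul, Polynomial.coeff_X_pow]
    · intro b _ hb
      have hbj : (b : ℕ) ≤ d := Nat.lt_succ_iff.mp b.isLt
      have : ¬ (d - (j : ℕ) = d - (b : ℕ)) := by
        intro h
        exact hb (Fin.ext (by omega))
      simp [Polynomial.coeff_C_mul, Polynomial.coeff_X_pow, this]
    · intro h
      exact absurd (Finset.mem_univ j) h
  rw [hV0] at hcj
  simp only [Polynomial.coeff_zero] at hcj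
  simp [← hcj]

/-- Near-full rank for the square-root generating function with momentum `μ`
and weight decay `λ`: for `0 ≤ μ < λ ≤ 1` and `g = √(1/((1−λx)(1−μx)))`, the
`(d+1)×(d+1)` Hankel matrix of coefficients of `g` has rank at least `d − 4`. -/
theorem sqrt_weighted_hankel_near_full_rank (l m : ℝ) (hm : 0 ≤ m) (hml : m < l) (hl : l ≤ 1)
    (g : PowerSeries ℝ)
    (hg0 : PowerSeries.coeff 0 g = 1)
    (hg : g ^ 2 * ((1 - PowerSeries.C l * PowerSeries.X)
      * (1 - PowerSeries.C m * PowerSeries.X)) = 1) (d : ℕ) :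
    d - 4 ≤ (Matrix.of fun (i j : Fin (d + 1)) =>
      PowerSeries.coeff ((i : ℕ) + j) g).rank := by
  set M : Matrix (Fin (d + 1)) (Fin (d + 1)) ℝ :=
    Matrix.of fun (i j : Fin (d + 1)) => PowerSeries.coeff ((i : ℕ) + j) g with hM
  have hinj : Function.Injective M.mulVecLin := by
    rw [← LinearMap.ker_eq_bot, LinearMap.ker_eq_bot']
    intro v hv
    apply hankel_kernel_eq_zero l m hm hml g hg d
    intro i
    have := congrFun hv i
    simpa [hM, Matrix.mulVecLin, Matrix.mulVec, dotProduct] using this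
  have : M.rank = d + 1 := by
    rw [Matrix.rank]
    rw [LinearMap.finrank_range_of_inj hinj]
    simp
  omega
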